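/- For any incident point-line pair (p, ℓ) of the projective plane of order 3, the 12×12 matrix H_{p,ℓ} — obtained from the ±1 incidence matrix E by deleting row p and column ℓ and negating entry e_{ij} exactly when i ∈ ℓ and j passes through p — is a Hadamard matrix: any two distinct rows are orthogonal. -/

import Mathlib

/-- A finite projective plane of order `n`: `n^2+n+1` points and lines,
each line has `n+1` points, each point on `n+1` lines, two points span a
unique line, two lines meet in one point. -/
structure ProjPlane (n : ℕ) where
  P : Type
  [fintypeP : Fintype P]
  [decP : DecidableEq P]
  L : Finset (Finset P)
  cardP : Fintype.card P = n ^ 2 + n + 1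
  cardL : L.card = n ^ 2 + n + 1
  line_card : ∀ ℓ ∈ L, ℓ.card = n + 1
  point_lines : ∀ p : P, (L.filter (fun ℓ => p ∈ ℓ)).card = n + 1
  unique_line : ∀ p q : P, p ≠ q → ∃! ℓ, ℓ ∈ L ∧ p ∈ ℓ ∧ q ∈ ℓ
  lines_meet : ∀ ℓ ∈ L, ∀ m ∈ L, ℓ ≠ m → (ℓ ∩ m).card = 1

attribute [instance] ProjPlane.fintypeP ProjPlane.decP

/-- The ±1 incidence matrix entry: `-1` if the point lies on the line, `+1`
otherwise. -/
def pmEntry (Pl : ProjPlane 3) (i : Pl.P) (j : Finset Pl.P) : ℤ :=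
  if i ∈ j then -1 else 1

/-- The entry of the 12×12 matrix `H_{p,ℓ}`: negate `e_{ij}` exactly when
`i ∈ ℓ` and `p ∈ j`. -/
def hadEntry (Pl : ProjPlane 3) (p : Pl.P) (ℓ : Finset Pl.P)
    (i : Pl.P) (j : Finset Pl.P) : ℤ :=
  if i ∈ ℓ ∧ p ∈ j then -pmEntry Pl i j else pmEntry Pl i j

section Aux
variable (Pl : ProjPlane 3)

lemma pm_mul (r s : Pl.P) (m : Finset Pl.P) :
    pmEntry Pl r m * pmEntry Pl s m
      = 1 - 2*(if r ∈ m then (1:ℤ) else 0) - 2*(if s ∈ m then (1:ℤ) else 0)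
        + 4*(if r ∈ m ∧ s ∈ m then (1:ℤ) else 0) := by
  unfold pmEntry; split_ifs <;> simp_all

lemma sumPM (S : Finset (Finset Pl.P)) (r s : Pl.P) :
    ∑ m ∈ S, pmEntry Pl r m * pmEntry Pl s m
      = (S.card : ℤ) - 2*((S.filter (fun m => r ∈ m)).card : ℤ)
        - 2*((S.filter (fun m => s ∈ m)).card : ℤ)
        + 4*((S.filter (fun m => r ∈ m ∧ s ∈ m)).card : ℤ) := by
  simp only [pm_mul]
  rw [Finset.sum_add_distrib, Finset.sum_sub_distrib, Finset.sum_sub_distrib,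
    ← Finset.mul_sum, ← Finset.mul_sum, ← Finset.mul_sum,
    Finset.sum_boole, Finset.sum_boole, Finset.sum_boole]
  simp

lemma count_two (r s : Pl.P) (h : r ≠ s) :
    (Pl.L.filter (fun m => r ∈ m ∧ s ∈ m)).card = 1 := by
  obtain ⟨m₀, ⟨hm, hr, hs⟩, huniq⟩ := Pl.unique_line r s h
  rw [Finset.card_eq_one]
  refine ⟨m₀, ?_⟩
  ext m
  simp only [Finset.mem_filter, Finset.mem_singleton]
  constructor
  · rintro ⟨h1, h2, h3⟩; exact huniq m ⟨h1, h2, h3⟩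
  · rintro rfl; exact ⟨hm, hr, hs⟩

lemma count_one (r : Pl.P) : (Pl.L.filter (fun m => r ∈ m)).card = 4 :=
  Pl.point_lines r

lemma erase_count_one {ℓ : Finset Pl.P} (hℓ : ℓ ∈ Pl.L) (r : Pl.P) :
    (((Pl.L.erase ℓ)).filter (fun m => r ∈ m)).card
      = 4 - (if r ∈ ℓ then 1 else 0) := by
  rw [Finset.filter_erase]
  by_cases hr : r ∈ ℓ
  · have hmem : ℓ ∈ Pl.L.filter (fun m => r ∈ m) := Finset.mem_filter.2 ⟨hℓ, hr⟩
    rw [Finset.card_erase_of_mem hmem, count_one, if_pos hr]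
  · have hmem : ℓ ∉ Pl.L.filter (fun m => r ∈ m) := by
      simp [Finset.mem_filter, hr]
    rw [Finset.erase_eq_of_notMem hmem, count_one, if_neg hr]

lemma erase_count_two {ℓ : Finset Pl.P} (hℓ : ℓ ∈ Pl.L) (r s : Pl.P) (h : r ≠ s) :
    (((Pl.L.erase ℓ)).filter (fun m => r ∈ m ∧ s ∈ m)).card
      = 1 - (if r ∈ ℓ ∧ s ∈ ℓ then 1 else 0) := by
  rw [Finset.filter_erase]
  by_cases hr : r ∈ ℓ ∧ s ∈ ℓ
  · have hmem : ℓ ∈ Pl.L.filter (fun m => r ∈ m ∧ s ∈ m) := Finset.mem_filter.2 ⟨hℓ, hr⟩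
    rw [Finset.card_erase_of_mem hmem, count_two Pl r s h, if_pos hr]
  · have hmem : ℓ ∉ Pl.L.filter (fun m => r ∈ m ∧ s ∈ m) := by
      simp only [Finset.mem_filter]; tauto
    rw [Finset.erase_eq_of_notMem hmem, count_two Pl r s h, if_neg hr]

lemma erase_card {ℓ : Finset Pl.P} (hℓ : ℓ ∈ Pl.L) : (Pl.L.erase ℓ).card = 12 := by
  rw [Finset.card_erase_of_mem hℓ, Pl.cardL]; norm_num

end Aux

theorem stmt15 (Pl : ProjPlane 3) (p : Pl.P) (ℓ : Finset Pl.P)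
    (hℓ : ℓ ∈ Pl.L) (hp : p ∈ ℓ)
    (r s : {x : Pl.P // x ≠ p}) (hrs : r ≠ s) :
    ∑ j : {m : Finset Pl.P // m ∈ Pl.L ∧ m ≠ ℓ},
      hadEntry Pl p ℓ r.val j.val * hadEntry Pl p ℓ s.val j.val = 0 := by
  have hrp : r.val ≠ p := r.2
  have hsp : s.val ≠ p := s.2
  have hrsv : r.val ≠ s.val := fun h => hrs (Subtype.ext h)
  have hsub : ∑ j : {m : Finset Pl.P // m ∈ Pl.L ∧ m ≠ ℓ},
      hadEntry Pl p ℓ r.val j.val * hadEntry Pl p ℓ s.val j.val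
      = ∑ m ∈ Pl.L.erase ℓ, hadEntry Pl p ℓ r.val m * hadEntry Pl p ℓ s.val m :=
    (Finset.sum_subtype (Pl.L.erase ℓ)
      (p := fun m => m ∈ Pl.L ∧ m ≠ ℓ)
      (fun m => by rw [Finset.mem_erase, and_comm])
      (fun m => hadEntry Pl p ℓ r.val m * hadEntry Pl p ℓ s.val m)).symm
  rw [hsub]
  have mixed : ∀ a b : Pl.P, a ≠ p → a ∈ ℓ → b ∉ ℓ → a ≠ b → b ≠ p →
      ∑ m ∈ Pl.L.erase ℓ,
        ((if p ∈ m then -1 else 1) * (pmEntry Pl a m * pmEntry Pl b m)) = 0 := by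
    intro a b hap ha hb hab hbp
    have split : ∀ m : Finset Pl.P,
        (if p ∈ m then (-1:ℤ) else 1) * (pmEntry Pl a m * pmEntry Pl b m)
        = pmEntry Pl a m * pmEntry Pl b m
          - 2 * (if p ∈ m then pmEntry Pl a m * pmEntry Pl b m else 0) := by
      intro m; split_ifs <;> ring
    simp only [split]
    rw [Finset.sum_sub_distrib, ← Finset.mul_sum, ← Finset.sum_filter]
    have h1 : ∑ m ∈ Pl.L.erase ℓ, pmEntry Pl a m * pmEntry Pl b m = 2 := by
      rw [sumPM, erase_card Pl hℓ, erase_count_one Pl hℓ, erase_count_one Pl hℓ,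
        erase_count_two Pl hℓ a b hab, if_pos ha, if_neg hb,
        if_neg (fun h => hb h.2)]
      norm_num
    have h2 : ∑ m ∈ (Pl.L.erase ℓ).filter (fun m => p ∈ m),
        pmEntry Pl a m * pmEntry Pl b m = 1 := by
      rw [sumPM]
      have hc : ((Pl.L.erase ℓ).filter (fun m => p ∈ m)).card = 3 := by
        rw [erase_count_one Pl hℓ p, if_pos hp]
      have hca : (((Pl.L.erase ℓ).filter (fun m => p ∈ m)).filter
          (fun m => a ∈ m)).card = 0 := by
        rw [Finset.filter_filter, erase_count_two Pl hℓ p a (Ne.symm hap),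
          if_pos ⟨hp, ha⟩]
      have hcb : (((Pl.L.erase ℓ).filter (fun m => p ∈ m)).filter
          (fun m => b ∈ m)).card = 1 := by
        rw [Finset.filter_filter, erase_count_two Pl hℓ p b (Ne.symm hbp),
          if_neg (fun h => hb h.2)]
      have hcab : (((Pl.L.erase ℓ).filter (fun m => p ∈ m)).filter
          (fun m => a ∈ m ∧ b ∈ m)).card = 0 := by
        have hsub2 : ((Pl.L.erase ℓ).filter (fun m => p ∈ m)).filter
            (fun m => a ∈ m ∧ b ∈ m)
            ⊆ ((Pl.L.erase ℓ).filter (fun m => p ∈ m)).filter (fun m => a ∈ m) :=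
          Finset.monotone_filter_right _ (fun m _ hm => hm.1)
        have := Finset.card_le_card hsub2
        omega
      rw [hc, hca, hcb, hcab]
      norm_num
    rw [h1, h2]; ring
  by_cases hr : r.val ∈ ℓ <;> by_cases hs : s.val ∈ ℓ
  · have heq : ∀ m ∈ Pl.L.erase ℓ, hadEntry Pl p ℓ r.val m * hadEntry Pl p ℓ s.val m
        = pmEntry Pl r.val m * pmEntry Pl s.val m := by
      intro m _
      simp only [hadEntry, hr, hs, true_and]
      split_ifs <;> ring
    rw [Finset.sum_congr rfl heq, sumPM, erase_card Pl hℓ,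
      erase_count_one Pl hℓ, erase_count_one Pl hℓ,
      erase_count_two Pl hℓ r.val s.val hrsv, if_pos hr, if_pos hs, if_pos ⟨hr, hs⟩]
    norm_num
  · have heq : ∀ m ∈ Pl.L.erase ℓ, hadEntry Pl p ℓ r.val m * hadEntry Pl p ℓ s.val m
        = (if p ∈ m then -1 else 1) * (pmEntry Pl r.val m * pmEntry Pl s.val m) := by
      intro m _
      simp only [hadEntry, hr, hs, true_and, false_and, if_false]
      split_ifs <;> ring
    rw [Finset.sum_congr rfl heq]
    exact mixed r.val s.val hrp hr hs hrsv hsp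
  · have heq : ∀ m ∈ Pl.L.erase ℓ, hadEntry Pl p ℓ r.val m * hadEntry Pl p ℓ s.val m
        = (if p ∈ m then -1 else 1) * (pmEntry Pl s.val m * pmEntry Pl r.val m) := by
      intro m _
      simp only [hadEntry, hr, hs, true_and, false_and, if_false]
      split_ifs <;> ring
    rw [Finset.sum_congr rfl heq]
    exact mixed s.val r.val hsp hs hr (Ne.symm hrsv) hrp
  · have heq : ∀ m ∈ Pl.L.erase ℓ, hadEntry Pl p ℓ r.val m * hadEntry Pl p ℓ s.val m
        = pmEntry Pl r.val m * pmEntry Pl s.val m := by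
      intro m _
      simp only [hadEntry, hr, hs, false_and, if_false]
    rw [Finset.sum_congr rfl heq, sumPM, erase_card Pl hℓ,
      erase_count_one Pl hℓ, erase_count_one Pl hℓ,
      erase_count_two Pl hℓ r.val s.val hrsv, if_neg hr, if_neg hs,
      if_neg (fun h => hr h.1)]
    norm_num
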